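/- Every T0 topological space embeds in a pseudoradial T0 space. -/

import Mathlib

open Filter Topology

universe u

/-- The two points of the Sierpiński space. -/
inductive SPt : Type
  | zero
  | one
deriving DecidableEq

/-- The Sierpiński topology: `{zero}` is open, `{one}` is not. -/
instance : TopologicalSpace SPt := TopologicalSpace.generateFrom {{SPt.zero}}

/-- `A` is closed under limits of `o`-indexed transfinite sequences for all infinite
ordinals `o ≤ β` (β an infinite cardinal, viewed as an ordinal). -/
def OrdSeqClosed {X : Type u} [TopologicalSpace X] (β : Cardinal.{u}) (A : Set X) : Prop :=
  ∀ o : Ordinal.{u}, Ordinal.omega0 ≤ o → o ≤ β.ord →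
    ∀ f : o.ToType → X, (∀ i, f i ∈ A) →
    ∀ x : X, Filter.Tendsto f Filter.atTop (nhds x) → x ∈ A

/-- A space is β-sequential if every such subset is closed. -/
def IsBetaSequential (X : Type u) [TopologicalSpace X] (β : Cardinal.{u}) : Prop :=
  ∀ A : Set X, OrdSeqClosed β A → IsClosed A

/-- `A` contains limits of all convergent transfinite sequences of its points. -/
def TransSeqClosed {X : Type u} [TopologicalSpace X] (A : Set X) : Prop :=
  ∀ o : Ordinal.{u}, Ordinal.omega0 ≤ o →
    ∀ f : o.ToType → X, (∀ i, f i ∈ A) →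
    ∀ x : X, Filter.Tendsto f Filter.atTop (nhds x) → x ∈ A

/-- Pseudoradial space. -/
def IsPseudoradial (X : Type u) [TopologicalSpace X] : Prop :=
  ∀ A : Set X, TransSeqClosed A → IsClosed A

lemma spt_isOpen_zero : IsOpen ({SPt.zero} : Set SPt) :=
  TopologicalSpace.GenerateOpen.basic _ rfl

lemma spt_open_one {U : Set SPt} (h : IsOpen U) (h1 : SPt.one ∈ U) : U = Set.univ := by
  have h' : TopologicalSpace.GenerateOpen {{SPt.zero}} U := h
  induction h' with
  | basic s hs => rw [Set.mem_singleton_iff] at hs; subst hs; simp at h1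
  | univ => rfl
  | inter s t hs ht ihs iht => rw [Set.mem_inter_iff] at h1; rw [ihs hs h1.1, iht ht h1.2]; simp
  | sUnion S hS ih =>
      obtain ⟨s, hsS, hone⟩ := h1
      exact Set.eq_univ_of_univ_subset ((ih s hsS (hS s hsS) hone) ▸ Set.subset_sUnion_of_mem hsS)

lemma tendsto_spt {α : Type*} {l : Filter α} {f : α → SPt} {p : SPt}
    (h : p = SPt.zero → ∀ᶠ x in l, f x = SPt.zero) : Tendsto f l (𝓝 p) := by
  rw [tendsto_nhds]
  intro s hs hps
  by_cases h1 : SPt.one ∈ s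
  · rw [spt_open_one hs h1]; simp
  · have hp : p = SPt.zero := by
      cases p with
      | zero => rfl
      | one => exact absurd hps h1
    have hz : SPt.zero ∈ s := hp ▸ hps
    filter_upwards [h hp] with x hx
    show f x ∈ s
    rw [hx]; exact hz

instance : T0Space SPt := by
  constructor
  intro x y h
  have := h.mem_open_iff spt_isOpen_zero
  cases x <;> cases y <;> simp_all

lemma spt_continuous {W : Type*} [TopologicalSpace W] {f : W → SPt}
    (h : IsOpen (f ⁻¹' {SPt.zero})) : Continuous f := by
  have : Continuous[_, TopologicalSpace.generateFrom {{SPt.zero}}] f := by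
    rw [continuous_generateFrom_iff]
    rintro s hs
    rw [Set.mem_singleton_iff] at hs
    subst hs
    exact h
  exact this

open Cardinal in
lemma spt_key {I : Type u} (A : Set (I → SPt)) (hA : TransSeqClosed A) (Z : Set I)
    (hcl : ∀ F : Finset I, ↑F ⊆ Z → ∃ a ∈ A, ∀ i ∈ F, a i = SPt.zero) :
    ∀ (c : Cardinal.{u}) (S : Set I), #S = c → S ⊆ Z →
      ∃ a ∈ A, ∀ i ∈ S, a i = SPt.zero := by
  classical
  intro c
  induction c using WellFoundedLT.induction with
  | _ c IH =>
  intro S hSc hSZ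
  rcases Set.finite_or_infinite S with hfin | hinf
  · obtain ⟨a, haA, ha⟩ := hcl hfin.toFinset (by simpa using hSZ)
    exact ⟨a, haA, fun i hi => ha i (hfin.mem_toFinset.mpr hi)⟩
  · have hc : (Cardinal.aleph0 : Cardinal.{u}) ≤ c := by
      have := hinf.to_subtype
      exact hSc ▸ Cardinal.aleph0_le_mk ↥S
    set o := c.ord with ho
    have hJ : #o.ToType = c := Cardinal.mk_ord_toType c
    obtain ⟨g⟩ : Nonempty (o.ToType ≃ ↥S) := Cardinal.eq.mp (hJ.trans hSc.symm)
    have hex : ∀ j : o.ToType,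
        ∃ a ∈ A, ∀ i ∈ (fun k => ((g k : ↥S) : I)) '' Set.Iic j, a i = SPt.zero := by
      intro j
      have hsub : (fun k => ((g k : ↥S) : I)) '' Set.Iic j ⊆ S := by
        rintro i ⟨k, _, rfl⟩; exact (g k).2
      have hIio : #(Set.Iio j) < c := Cardinal.mk_Iio_ord_toType j
      have hcard : #((fun k => ((g k : ↥S) : I)) '' Set.Iic j) < c := by
        calc #((fun k => ((g k : ↥S) : I)) '' Set.Iic j) ≤ #(Set.Iic j) :=
              Cardinal.mk_image_le
        _ = #(↥(insert j (Set.Iio j))) := by rw [Set.Iio_insert]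
        _ ≤ #(Set.Iio j) + 1 := Cardinal.mk_insert_le
        _ < c := Cardinal.add_lt_of_lt hc hIio (lt_of_lt_of_le Cardinal.one_lt_aleph0 hc)
      obtain ⟨a, haA, ha⟩ := IH _ hcard _ rfl (hsub.trans hSZ)
      exact ⟨a, haA, ha⟩
    choose a haA hz using hex
    set y : I → SPt := fun i => if i ∈ S then SPt.zero else SPt.one with hy
    have hten : Tendsto a atTop (𝓝 y) := by
      rw [tendsto_pi_nhds]
      intro i
      apply tendsto_spt
      intro hyi
      have hiS : i ∈ S := by
        by_contra hni
        simp only [hy, if_neg hni] at hyi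
        exact SPt.noConfusion hyi
      haveI : Nonempty o.ToType := ⟨g.symm ⟨i, hiS⟩⟩
      rw [eventually_atTop]
      refine ⟨g.symm ⟨i, hiS⟩, fun j hj => ?_⟩
      exact hz j i ⟨g.symm ⟨i, hiS⟩, hj, by simp⟩
    have hω : Ordinal.omega0 ≤ o := by
      rw [ho, ← Cardinal.ord_aleph0]
      exact Cardinal.ord_le_ord.mpr hc
    have hyA : y ∈ A := hA o hω a haA y hten
    exact ⟨y, hyA, fun i hi => if_pos hi⟩

/-- Every T0 space embeds in a pseudoradial T0 space. -/
theorem t0_embeds_in_pseudoradial_t0 (X : Type u) [TopologicalSpace X] [T0Space X] :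
    ∃ (Y : Type u) (tY : TopologicalSpace Y), @IsPseudoradial Y tY ∧ @T0Space Y tY ∧
      ∃ e : X → Y, @Topology.IsEmbedding X Y _ tY e := by
  classical
  set I := {s : Set X // IsOpen s} with hI
  refine ⟨I → SPt, inferInstance, ?_, inferInstance, ?_⟩
  · -- pseudoradial
    intro A hA
    rw [← closure_subset_iff_isClosed]
    intro x hx
    set Z : Set I := {i | x i = SPt.zero} with hZ
    have hcl : ∀ F : Finset I, ↑F ⊆ Z → ∃ a ∈ A, ∀ i ∈ F, a i = SPt.zero := by
      intro F hF
      have hUeq : {y : I → SPt | ∀ i ∈ F, y i = SPt.zero} =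
          ⋂ i ∈ F, (fun y : I → SPt => y i) ⁻¹' {SPt.zero} := by
        ext y; simp
      have hUopen : IsOpen {y : I → SPt | ∀ i ∈ F, y i = SPt.zero} := by
        rw [hUeq]
        exact isOpen_biInter_finset fun i _ => spt_isOpen_zero.preimage (continuous_apply i)
      have hxU : x ∈ {y : I → SPt | ∀ i ∈ F, y i = SPt.zero} := fun i hi => hF hi
      obtain ⟨a, haU, haA⟩ := mem_closure_iff.mp hx _ hUopen hxU
      exact ⟨a, haA, haU⟩
    obtain ⟨a, haA, ha⟩ := spt_key A hA Z hcl (Cardinal.mk Z) Z rfl (subset_refl _)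
    have hten : Tendsto (fun _ : (Ordinal.omega0 : Ordinal.{u}).ToType => a) atTop (𝓝 x) := by
      rw [tendsto_pi_nhds]
      intro i
      apply tendsto_spt
      intro hxi
      exact Filter.Eventually.of_forall fun _ => ha i hxi
    exact hA Ordinal.omega0 le_rfl _ (fun _ => haA) x hten
  · -- embedding
    set e : X → I → SPt := fun x i => if x ∈ i.1 then SPt.zero else SPt.one with he
    have hcont : Continuous e := by
      refine continuous_pi fun i => spt_continuous ?_
      have : (fun x => e x i) ⁻¹' {SPt.zero} = i.1 := by
        ext x
        by_cases hx : x ∈ i.1 <;> simp [he, hx]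
      rw [this]
      exact i.2
    have hinj : Function.Injective e := by
      intro x y h
      have hins : Inseparable x y := by
        rw [inseparable_iff_forall_isOpen]
        intro s hs
        have hcoord : (if x ∈ s then SPt.zero else SPt.one)
            = (if y ∈ s then SPt.zero else SPt.one) := congrFun h ⟨s, hs⟩
        by_cases hx : x ∈ s <;> by_cases hy : y ∈ s <;> simp [hx, hy] at hcoord ⊢
      exact hins.eq
    refine ⟨e, ⟨?_⟩, hinj⟩
    refine le_antisymm (continuous_iff_le_induced.mp hcont) ?_
    rw [TopologicalSpace.le_def]
    intro U hU
    refine ⟨(fun y : I → SPt => y (⟨U, hU⟩ : I)) ⁻¹' {SPt.zero}, ?_, ?_⟩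
    · exact IsOpen.preimage (continuous_apply (⟨U, hU⟩ : I)) spt_isOpen_zero
    · ext x
      by_cases hx : x ∈ U <;> simp [he, hx]
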